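/- Let λ₁, λ₂, λ₃, λ₄ > 0, θ > 0, c₁, c₂, c₃, c₄ > 0, u* ∈ ℝ, and write φᵢ = φ_{λᵢ} where φ_λ(x) = λ(e^x − 1). Let η₁, η₂, η₃, η₄ : [0,∞) → ℝ be differentiable, let φ̂₁, φ̂₂, φ̂₃, φ̂₄ : [0,∞) → ℝ be arbitrary functions, and set z₁ = η₃ − η₂, z₂ = η₄ − z₁, z₃ = η₁ − z₂. Assume φ₁(z₃(t)) ≠ 0 for all t and that the perturbed closed-loop system η₁′ = u* − u − φ̂₂, η₂′ = −φ̂₃, η₃′ = −φ̂₄, η₄′ = −φ̂₁ holds with u = u* + (1/φ₁(z₃))·(c₄·φ₁(z₃)² + θc₁·φ₂(η₂)² + θc₃·φ₄(z₂)² + θc₂·φ₃(z₁)²) + ((φ₁(z₃) − θφ₄(z₂))/φ₁(z₃))·φ₁(η₁) − φ₂(η₂) + ((φ₁(z₃) − θφ₄(z₂) + θφ₃(z₁) − θφ₂(η₂))/φ₁(z₃))·φ₃(η₃) + ((θφ₄(z₂) − φ₁(z₃) − θφ₃(z₁))/φ₁(z₃))·φ₄(η₄). Then, with V₄(η₂,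 z₁, z₂, z₃) = θλ₂ω̃(η₂) + θλ₃ω̃(z₁) + θλ₄ω̃(z₂) + λ₁ω̃(z₃), ω̃(x) = e^x − 1 − x, one has d/dt V₄ = −θc₁·φ₂(η₂)² − θc₂·φ₃(z₁)² − θc₃·φ₄(z₂)² − c₄·φ₁(z₃)² + A₁·(φ̂₁ − φ₁(η₁)) + A₂·(φ̂₂ − φ₂(η₂)) + A₃·(φ̂₃ − φ₃(η₃)) + A₄·(φ̂₄ − φ₄(η₄)), where A₁ = φ₁(z₃) − θφ₄(z₂), A₂ = −φ₁(z₃), A₃ = φ₁(z₃) − θφ₄(z₂) + θφ₃(z₁) − θφ₂(η₂), A₄ = θφ₄(z₂) − φ₁(z₃) − θφ₃(z₁). -/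

import Mathlib

/-- `φ_λ(x) = λ(e^x − 1)`. -/
noncomputable def phiL (l x : ℝ) : ℝ := l * (Real.exp x - 1)

/-- `ω̃(x) = e^x − 1 − x`. -/
noncomputable def omegaTilde (x : ℝ) : ℝ := Real.exp x - 1 - x


private lemma omega_deriv {f : ℝ → ℝ} {d t : ℝ} (c : ℝ)
    (hf : HasDerivWithinAt f d (Set.Ici 0) t) :
    HasDerivWithinAt (fun s => c * omegaTilde (f s))
      (c * (Real.exp (f t) - 1) * d) (Set.Ici 0) t := by
  have h : HasDerivAt (fun x => Real.exp x - 1 - x) (Real.exp (f t) - 1) (f t) := by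
    exact ((Real.hasDerivAt_exp (f t)).sub_const 1).sub (hasDerivAt_id' (f t))
  have := (h.comp_hasDerivWithinAt t hf).const_mul c
  simpa [omegaTilde, mul_assoc] using this

/-- Lyapunov derivative identity at the heart of Proposition 3.18 (four-species
non-transitive competition with nonzero internal dynamics): for the perturbed
closed loop with arbitrary `φ̂ᵢ`,
`d/dt V₄ = −θc₁φ₂(η₂)² − θc₂φ₃(z₁)² − θc₃φ₄(z₂)² − c₄φ₁(z₃)²
  + ∑ᵢ Aᵢ(φ̂ᵢ − φᵢ(ηᵢ))`. -/
theorem stmt5 (l1 l2 l3 l4 θ c1 c2 c3 c4 ustar : ℝ)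
    (hl1 : 0 < l1) (hl2 : 0 < l2) (hl3 : 0 < l3) (hl4 : 0 < l4) (hθ : 0 < θ)
    (hc1 : 0 < c1) (hc2 : 0 < c2) (hc3 : 0 < c3) (hc4 : 0 < c4)
    (η1 η2 η3 η4 z1 z2 z3 u : ℝ → ℝ)
    (phat1 phat2 phat3 phat4 : ℝ → ℝ)
    (hz1 : ∀ t, z1 t = η3 t - η2 t)
    (hz2 : ∀ t, z2 t = η4 t - z1 t)
    (hz3 : ∀ t, z3 t = η1 t - z2 t)
    (hne : ∀ t, 0 ≤ t → phiL l1 (z3 t) ≠ 0)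
    (hu : ∀ t, u t = ustar
      + (1 / phiL l1 (z3 t)) *
          (c4 * (phiL l1 (z3 t))^2 + θ * c1 * (phiL l2 (η2 t))^2
            + θ * c3 * (phiL l4 (z2 t))^2 + θ * c2 * (phiL l3 (z1 t))^2)
      + ((phiL l1 (z3 t) - θ * phiL l4 (z2 t)) / phiL l1 (z3 t)) * phiL l1 (η1 t)
      - phiL l2 (η2 t)
      + ((phiL l1 (z3 t) - θ * phiL l4 (z2 t) + θ * phiL l3 (z1 t)
            - θ * phiL l2 (η2 t)) / phiL l1 (z3 t)) * phiL l3 (η3 t)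
      + ((θ * phiL l4 (z2 t) - phiL l1 (z3 t) - θ * phiL l3 (z1 t))
            / phiL l1 (z3 t)) * phiL l4 (η4 t))
    (hd1 : ∀ t, 0 ≤ t →
      HasDerivWithinAt η1 (ustar - u t - phat2 t) (Set.Ici 0) t)
    (hd2 : ∀ t, 0 ≤ t →
      HasDerivWithinAt η2 (-(phat3 t)) (Set.Ici 0) t)
    (hd3 : ∀ t, 0 ≤ t →
      HasDerivWithinAt η3 (-(phat4 t)) (Set.Ici 0) t)
    (hd4 : ∀ t, 0 ≤ t →
      HasDerivWithinAt η4 (-(phat1 t)) (Set.Ici 0) t) :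
    ∀ t, 0 ≤ t → HasDerivWithinAt
      (fun s => θ * l2 * omegaTilde (η2 s) + θ * l3 * omegaTilde (z1 s)
        + θ * l4 * omegaTilde (z2 s) + l1 * omegaTilde (z3 s))
      (-(θ * c1 * (phiL l2 (η2 t))^2) - θ * c2 * (phiL l3 (z1 t))^2
        - θ * c3 * (phiL l4 (z2 t))^2 - c4 * (phiL l1 (z3 t))^2
        + (phiL l1 (z3 t) - θ * phiL l4 (z2 t)) * (phat1 t - phiL l1 (η1 t))
        + (-(phiL l1 (z3 t))) * (phat2 t - phiL l2 (η2 t))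
        + (phiL l1 (z3 t) - θ * phiL l4 (z2 t) + θ * phiL l3 (z1 t)
            - θ * phiL l2 (η2 t)) * (phat3 t - phiL l3 (η3 t))
        + (θ * phiL l4 (z2 t) - phiL l1 (z3 t) - θ * phiL l3 (z1 t))
            * (phat4 t - phiL l4 (η4 t)))
      (Set.Ici 0) t := by
  intro t ht
  have h1 := hd1 t ht
  have h2 := hd2 t ht
  have h3 := hd3 t ht
  have h4 := hd4 t ht
  have hz1d : HasDerivWithinAt z1 (-(phat4 t) - -(phat3 t)) (Set.Ici 0) t :=
    (h3.sub h2).congr (fun y _ => hz1 y) (hz1 t)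
  have hz2d : HasDerivWithinAt z2 (-(phat1 t) - (-(phat4 t) - -(phat3 t))) (Set.Ici 0) t :=
    (h4.sub hz1d).congr (fun y _ => hz2 y) (hz2 t)
  have hz3d : HasDerivWithinAt z3
      ((ustar - u t - phat2 t) - (-(phat1 t) - (-(phat4 t) - -(phat3 t)))) (Set.Ici 0) t :=
    (h1.sub hz2d).congr (fun y _ => hz3 y) (hz3 t)
  have hsum := ((omega_deriv (θ * l2) h2).add (omega_deriv (θ * l3) hz1d)).add
    ((omega_deriv (θ * l4) hz2d).add (omega_deriv l1 hz3d))
  have hne' := hne t ht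
  convert hsum.congr_deriv ?_ using 2
  · rfl
  · rfl
  · simp only [Pi.add_apply]; ring
  · rw [hu t]
    simp only [phiL] at *
    generalize l1 * (Real.exp (z3 t) - 1) = P at *
    field_simp
    ring
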